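/- Let 0 < α_min ≤ α_max < 1. Then there exists a constant C ∈ (0,∞), independent of τ, such that for every τ ∈ (0,1], every α ∈ [α_min, α_max], and every σ ∈ [1/2, 1], the function a_0(α,σ;τ) := (τ^{−α}/Γ(2−α))·( ((1+σ)^{2−α} − σ^{2−α})/(2−α) − ((1+σ)^{1−α} − σ^{1−α})/2 ) satisfies |∂_α a_0(α,σ;τ)| + |∂_σ a_0(α,σ;τ)| ≤ C·(1 + |log τ|)·τ^{−α_max}. -/

import Mathlib

set_option maxHeartbeats 1000000

open Real Set

/-- The zeroth normalized weight `a_0(α,σ;τ)` of the second-order approximation of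
the Caputo derivative of order `α`, with time step `τ` and intermediate parameter `σ`. -/
noncomputable def a0 (α σ τ : ℝ) : ℝ :=
  τ ^ (-α) / Real.Gamma (2 - α) *
    (((1 + σ) ^ (2 - α) - σ ^ (2 - α)) / (2 - α)
      - ((1 + σ) ^ (1 - α) - σ ^ (1 - α)) / 2)

private lemma gammaDeriv_continuousOn : ContinuousOn (deriv Real.Gamma) (Set.Ioi (0:ℝ)) := by
  have hU : IsOpen {s : ℂ | 0 < s.re} := isOpen_lt continuous_const Complex.continuous_re
  have hdiff : ∀ s : ℂ, 0 < s.re → DifferentiableAt ℂ Complex.Gamma s := by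
    intro s hs
    refine Complex.differentiableAt_Gamma _ (fun m h => ?_)
    rw [h] at hs
    simp only [Complex.neg_re, Complex.natCast_re] at hs
    have : (0:ℝ) ≤ (m:ℝ) := Nat.cast_nonneg m
    linarith
  have han : AnalyticOnNhd ℂ Complex.Gamma {s : ℂ | 0 < s.re} :=
    DifferentiableOn.analyticOnNhd (fun s hs => (hdiff s hs).differentiableWithinAt) hU
  have hcont : ContinuousOn (deriv Complex.Gamma) {s : ℂ | 0 < s.re} := han.deriv.continuousOn
  have key : ∀ x ∈ Set.Ioi (0:ℝ), deriv Real.Gamma x = (deriv Complex.Gamma ↑x).re := by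
    intro x hx
    have h1 : HasDerivAt Complex.Gamma (deriv Complex.Gamma ↑x) ↑x :=
      (hdiff x (by simpa using hx)).hasDerivAt
    have h2 := h1.real_of_complex
    have h3 : (fun y : ℝ => (Complex.Gamma ↑y).re) = Real.Gamma := by
      funext y; rw [Complex.Gamma_ofReal, Complex.ofReal_re]
    rw [h3] at h2
    exact h2.deriv
  refine ContinuousOn.congr ?_ key
  exact Complex.continuous_re.comp_continuousOn
    (hcont.comp Complex.continuous_ofReal.continuousOn (fun x hx => by simpa using hx))

private lemma rpow_le_four {x p : ℝ} (hx1 : 1/2 ≤ x) (hx2 : x ≤ 2) (hp1 : -1 ≤ p) (hp2 : p ≤ 2) :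
    x ^ p ≤ 4 := by
  rcases le_or_gt 1 x with h | h
  · calc x ^ p ≤ x ^ (2:ℝ) := Real.rpow_le_rpow_of_exponent_le h hp2
    _ ≤ 2 ^ (2:ℝ) := Real.rpow_le_rpow (by linarith) hx2 (by norm_num)
    _ = 4 := by rw [show (2:ℝ) = ((2:ℕ):ℝ) from by norm_num, Real.rpow_natCast]; norm_num
  · calc x ^ p ≤ x ^ (-1:ℝ) := Real.rpow_le_rpow_of_exponent_ge (by linarith) h.le hp1
    _ = x⁻¹ := Real.rpow_neg_one x
    _ ≤ 4 := by rw [inv_le_comm₀ (by linarith) (by norm_num)]; linarith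

private lemma abs_log_le_one' {x : ℝ} (hx1 : 1/2 ≤ x) (hx2 : x ≤ 2) : |Real.log x| ≤ 1 := by
  have h2 : Real.log 2 ≤ 1 := by
    have := Real.log_le_sub_one_of_pos (by norm_num : (0:ℝ) < 2); linarith
  rw [abs_le]
  refine ⟨?_, ?_⟩
  · have : Real.log (1/2) ≤ Real.log x := Real.log_le_log (by norm_num) hx1
    rw [Real.log_div one_ne_zero (by norm_num), Real.log_one] at this
    linarith
  · have : Real.log x ≤ Real.log 2 := Real.log_le_log (by linarith) hx2
    linarith

private lemma hasDerivAt_base (x c α : ℝ) (hx : 0 < x) :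
    HasDerivAt (fun a : ℝ => x ^ (c - a)) (-(x ^ (c - α) * Real.log x)) α := by
  have h := ((Real.hasStrictDerivAt_const_rpow hx (c - α)).hasDerivAt).comp α
    ((hasDerivAt_id α).const_sub c)
  simpa [Function.comp_def, mul_neg_one] using h

private lemma hasDerivAt_a0_alpha (σ τ α : ℝ) (hτ : 0 < τ) (hσ : 0 < σ) (hα1 : α < 1) :
    HasDerivAt (fun a => a0 a σ τ)
      ((-(τ ^ (-α) * Real.log τ) * Real.Gamma (2 - α)
          - τ ^ (-α) * (deriv Real.Gamma (2 - α) * (-1))) / (Real.Gamma (2 - α)) ^ 2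
        * (((1 + σ) ^ (2 - α) - σ ^ (2 - α)) / (2 - α)
            - ((1 + σ) ^ (1 - α) - σ ^ (1 - α)) / 2)
      + τ ^ (-α) / Real.Gamma (2 - α) *
        (((-((1 + σ) ^ (2 - α) * Real.log (1 + σ)) - -(σ ^ (2 - α) * Real.log σ)) * (2 - α)
            - ((1 + σ) ^ (2 - α) - σ ^ (2 - α)) * (-1)) / (2 - α) ^ 2
          + (-((1 + σ) ^ (1 - α) * Real.log (1 + σ)) - -(σ ^ (1 - α) * Real.log σ)) / 2 * (-1))) α := by
  have h2α : (0:ℝ) < 2 - α := by linarith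
  have hcpos : 0 < Real.Gamma (2 - α) := Real.Gamma_pos_of_pos h2α
  have h1σ : (0:ℝ) < 1 + σ := by linarith
  have hGammaNe : ∀ m : ℕ, (2 - α : ℝ) ≠ -m := by
    intro m
    have : (0:ℝ) ≤ (m:ℝ) := Nat.cast_nonneg m
    intro h; rw [h] at h2α; linarith
  have hT : HasDerivAt (fun a : ℝ => τ ^ (-a)) (-(τ ^ (-α) * Real.log τ)) α := by
    have h := ((Real.hasStrictDerivAt_const_rpow hτ (-α)).hasDerivAt).comp α (hasDerivAt_neg α)
    simpa [Function.comp_def, mul_neg_one] using h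
  have hG : HasDerivAt (fun a : ℝ => Real.Gamma (2 - a)) (deriv Real.Gamma (2 - α) * (-1)) α :=
    (Real.differentiableAt_Gamma hGammaNe).hasDerivAt.comp α ((hasDerivAt_id α).const_sub 2)
  have hq := hT.div hG (ne_of_gt hcpos)
  have hu2 := hasDerivAt_base (1 + σ) 2 α h1σ
  have hv2 := hasDerivAt_base σ 2 α hσ
  have hu1 := hasDerivAt_base (1 + σ) 1 α h1σ
  have hv1 := hasDerivAt_base σ 1 α hσ
  have hA := (hu2.sub hv2).div ((hasDerivAt_id α).const_sub 2) (ne_of_gt h2α)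
  have hB := ((hu1.sub hv1).div_const 2).neg
  have hP := hA.add hB
  have hfull := hq.mul hP
  have heq : (fun a => a0 a σ τ) =
      fun a => τ ^ (-a) / Real.Gamma (2 - a) *
        (((1 + σ) ^ (2 - a) - σ ^ (2 - a)) / (2 - a)
          - ((1 + σ) ^ (1 - a) - σ ^ (1 - a)) / 2) := by
    funext a; rfl
  rw [heq]
  refine hfull.congr_deriv ?_
  simp only [id_eq, Pi.add_apply, Pi.sub_apply, Pi.div_apply, Pi.neg_apply]
  ring

private lemma hasDerivAt_a0_sigma (σ τ α : ℝ) (hσ : 0 < σ) (h1σ : (0:ℝ) < 1 + σ) :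
    HasDerivAt (fun s => a0 α s τ)
      (τ ^ (-α) / Real.Gamma (2 - α) *
        (((1 * (2 - α) * (1 + σ) ^ (2 - α - 1) - (2 - α) * σ ^ (2 - α - 1)) / (2 - α)
          - (1 * (1 - α) * (1 + σ) ^ (1 - α - 1) - (1 - α) * σ ^ (1 - α - 1)) / 2))) σ := by
  have hu2 : HasDerivAt (fun s : ℝ => (1 + s) ^ (2 - α)) (1 * (2 - α) * (1 + σ) ^ (2 - α - 1)) σ :=
    ((hasDerivAt_id σ).const_add 1).rpow_const (Or.inl (ne_of_gt h1σ))
  have hv2 : HasDerivAt (fun s : ℝ => s ^ (2 - α)) ((2 - α) * σ ^ (2 - α - 1)) σ :=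
    Real.hasDerivAt_rpow_const (Or.inl (ne_of_gt hσ))
  have hu1 : HasDerivAt (fun s : ℝ => (1 + s) ^ (1 - α)) (1 * (1 - α) * (1 + σ) ^ (1 - α - 1)) σ :=
    ((hasDerivAt_id σ).const_add 1).rpow_const (Or.inl (ne_of_gt h1σ))
  have hv1 : HasDerivAt (fun s : ℝ => s ^ (1 - α)) ((1 - α) * σ ^ (1 - α - 1)) σ :=
    Real.hasDerivAt_rpow_const (Or.inl (ne_of_gt hσ))
  exact ((((hu2.sub hv2).div_const (2 - α)).sub ((hu1.sub hv1).div_const 2)).const_mul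
    (τ ^ (-α) / Real.Gamma (2 - α)))

private lemma abs_le_of_pos_le {x b : ℝ} (h0 : 0 < x) (h : x ≤ b) : |x| ≤ b := by
  rw [abs_of_pos h0]; exact h

/-- the partial derivatives of `a_0` with respect to α and σ are
bounded by C·(1 + |log τ|)·τ^{−α_max}, uniformly in τ ∈ (0,1], α ∈ [α_min,α_max],
σ ∈ [1/2,1]. -/
theorem stmt_7 (αmin αmax : ℝ)
    (h1 : 0 < αmin) (h2 : αmin ≤ αmax) (h3 : αmax < 1) :
    ∃ C > (0 : ℝ), ∀ τ ∈ Set.Ioc (0 : ℝ) 1, ∀ α ∈ Set.Icc αmin αmax,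
      ∀ σ ∈ Set.Icc (1/2 : ℝ) 1,
        |deriv (fun a => a0 a σ τ) α| + |deriv (fun s => a0 α s τ) σ| ≤
          C * (1 + |Real.log τ|) * τ ^ (-αmax) := by
  -- Gamma bounds on [1,2]
  have hΓcont : ContinuousOn Real.Gamma (Icc (1:ℝ) 2) := by
    intro x hx
    have hne : ∀ m : ℕ, x ≠ -m := by
      intro m h
      have : (0:ℝ) ≤ (m:ℝ) := Nat.cast_nonneg m
      have h1x := hx.1; rw [h] at h1x; linarith
    exact (Real.differentiableAt_Gamma hne).continuousAt.continuousWithinAt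
  obtain ⟨x₀, hx₀, hmin⟩ := isCompact_Icc.exists_isMinOn ⟨1, by norm_num, by norm_num⟩ hΓcont
  obtain ⟨M, hM⟩ := isCompact_Icc.exists_bound_of_continuousOn hΓcont
  obtain ⟨B, hB⟩ := isCompact_Icc.exists_bound_of_continuousOn
    (gammaDeriv_continuousOn.mono
      (show Set.Icc (1:ℝ) 2 ⊆ Set.Ioi 0 from fun x hx => lt_of_lt_of_le zero_lt_one hx.1))
  set m : ℝ := Real.Gamma x₀ with hmdef
  have hm0 : 0 < m := Real.Gamma_pos_of_pos (by linarith [hx₀.1])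
  have hM0 : 0 ≤ M := le_trans (norm_nonneg _) (hM 1 ⟨le_refl 1, by norm_num⟩)
  have hB0 : 0 ≤ B := le_trans (norm_nonneg _) (hB 1 ⟨le_refl 1, by norm_num⟩)
  have hmM : m ≤ M := le_trans (hmin ⟨le_refl 1, by norm_num⟩)
    (le_trans (le_abs_self _) (hM 1 ⟨le_refl 1, by norm_num⟩))
  refine ⟨12*(B+M)/m^2 + 48/m + 1, by positivity, ?_⟩
  intro τ hτ α hα σ hσ
  have hτ0 : 0 < τ := hτ.1
  have hτ1 : τ ≤ 1 := hτ.2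
  have hα0 : 0 < α := lt_of_lt_of_le h1 hα.1
  have hα1 : α < 1 := lt_of_le_of_lt hα.2 h3
  have hσl : 1/2 ≤ σ := hσ.1
  have hσr : σ ≤ 1 := hσ.2
  have hσ0 : 0 < σ := by linarith only [hσl]
  have h1σ : (0:ℝ) < 1 + σ := by linarith only [hσl]
  have h2α : (0:ℝ) < 2 - α := by linarith only [hα1]
  have h12α : (1:ℝ) ≤ 2 - α := by linarith only [hα1]
  have hmem : (2 - α) ∈ Icc (1:ℝ) 2 := ⟨by linarith only [hα1], by linarith only [hα0]⟩
  set c : ℝ := Real.Gamma (2 - α) with hcdef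
  have hcm : m ≤ c := hmin hmem
  have hc0 : 0 < c := lt_of_lt_of_le hm0 hcm
  have hcM : |c| ≤ M := by simpa [Real.norm_eq_abs] using hM _ hmem
  have hc'B : |deriv Real.Gamma (2 - α)| ≤ B := by
    simpa [Real.norm_eq_abs] using hB _ hmem
  set t : ℝ := τ ^ (-α) with htdef
  set tm : ℝ := τ ^ (-αmax) with htmdef
  have ht0 : 0 < t := Real.rpow_pos_of_pos hτ0 _
  have htm0 : 0 < tm := Real.rpow_pos_of_pos hτ0 _
  have httm : t ≤ tm := Real.rpow_le_rpow_of_exponent_ge hτ0 hτ1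
    (by linarith only [hα.2] : -αmax ≤ -α)
  set L : ℝ := |Real.log τ| with hLdef
  have hL0 : 0 ≤ L := abs_nonneg _
  -- rpow bounds
  have p1 : 0 < (1+σ) ^ (2-α) := Real.rpow_pos_of_pos h1σ _
  have p2 : 0 < σ ^ (2-α) := Real.rpow_pos_of_pos hσ0 _
  have p3 : 0 < (1+σ) ^ (1-α) := Real.rpow_pos_of_pos h1σ _
  have p4 : 0 < σ ^ (1-α) := Real.rpow_pos_of_pos hσ0 _
  have p5 : 0 < (1+σ) ^ (2-α-1) := Real.rpow_pos_of_pos h1σ _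
  have p6 : 0 < σ ^ (2-α-1) := Real.rpow_pos_of_pos hσ0 _
  have p7 : 0 < (1+σ) ^ (1-α-1) := Real.rpow_pos_of_pos h1σ _
  have p8 : 0 < σ ^ (1-α-1) := Real.rpow_pos_of_pos hσ0 _
  have b1 : (1+σ) ^ (2-α) ≤ 4 := rpow_le_four (by linarith only [hσl]) (by linarith only [hσr])
    (by linarith only [hα1]) (by linarith only [hα0])
  have b2 : σ ^ (2-α) ≤ 4 := rpow_le_four hσl (by linarith only [hσr])
    (by linarith only [hα1]) (by linarith only [hα0])
  have b3 : (1+σ) ^ (1-α) ≤ 4 := rpow_le_four (by linarith only [hσl]) (by linarith only [hσr])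
    (by linarith only [hα1]) (by linarith only [hα0])
  have b4 : σ ^ (1-α) ≤ 4 := rpow_le_four hσl (by linarith only [hσr])
    (by linarith only [hα1]) (by linarith only [hα0])
  have b5 : (1+σ) ^ (2-α-1) ≤ 4 := rpow_le_four (by linarith only [hσl]) (by linarith only [hσr])
    (by linarith only [hα1]) (by linarith only [hα0])
  have b6 : σ ^ (2-α-1) ≤ 4 := rpow_le_four hσl (by linarith only [hσr])
    (by linarith only [hα1]) (by linarith only [hα0])
  have b7 : (1+σ) ^ (1-α-1) ≤ 4 := rpow_le_four (by linarith only [hσl]) (by linarith only [hσr])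
    (by linarith only [hα1]) (by linarith only [hα0])
  have b8 : σ ^ (1-α-1) ≤ 4 := rpow_le_four hσl (by linarith only [hσr])
    (by linarith only [hα1]) (by linarith only [hα0])
  have l1 : |Real.log (1+σ)| ≤ 1 := abs_log_le_one' (by linarith only [hσl])
    (by linarith only [hσr])
  have l2 : |Real.log σ| ≤ 1 := abs_log_le_one' hσl (by linarith only [hσr])
  -- abbreviations for the pieces
  set u2 : ℝ := (1+σ) ^ (2-α) with hu2def
  set v2 : ℝ := σ ^ (2-α) with hv2def
  set u1 : ℝ := (1+σ) ^ (1-α) with hu1def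
  set v1 : ℝ := σ ^ (1-α) with hv1def
  set P : ℝ := (u2 - v2) / (2-α) - (u1 - v1) / 2 with hPdef
  set A2 : ℝ := -(u2 * Real.log (1+σ)) + v2 * Real.log σ with hA2def
  set B2 : ℝ := -(u1 * Real.log (1+σ)) + v1 * Real.log σ with hB2def
  set P2 : ℝ := (A2 * (2-α) + (u2 - v2)) / (2-α)^2 - B2 / 2 with hP2def
  set Q : ℝ := ((2-α) * (1+σ)^(2-α-1) - (2-α) * σ^(2-α-1)) / (2-α)
      - ((1-α) * (1+σ)^(1-α-1) - (1-α) * σ^(1-α-1)) / 2 with hQdef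
  -- derivative identities
  have hda : deriv (fun a => a0 a σ τ) α
      = (t * (deriv Real.Gamma (2-α) - Real.log τ * c)) / c^2 * P + t / c * P2 := by
    rw [(hasDerivAt_a0_alpha σ τ α hτ0 hσ0 hα1).deriv]
    simp only [hPdef, hA2def, hB2def, hP2def, htdef, hcdef, hu2def, hv2def, hu1def, hv1def]
    ring
  have hds : deriv (fun s => a0 α s τ) σ = t / c * Q := by
    rw [(hasDerivAt_a0_sigma σ τ α hσ0 h1σ).deriv]
    simp only [hQdef, htdef, hcdef]
    ring
  -- bounds on the pieces
  have habsA : |u2 - v2| ≤ 8 := by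
    calc |u2 - v2| ≤ |u2| + |v2| := abs_sub _ _
    _ ≤ 8 := by rw [abs_of_pos p1, abs_of_pos p2]; linarith only [b1, b2]
  have habsB : |u1 - v1| ≤ 8 := by
    calc |u1 - v1| ≤ |u1| + |v1| := abs_sub _ _
    _ ≤ 8 := by rw [abs_of_pos p3, abs_of_pos p4]; linarith only [b3, b4]
  have habsA2 : |A2| ≤ 8 := by
    have e1 : |u2 * Real.log (1+σ)| ≤ 4 := by
      rw [abs_mul]
      calc |u2| * |Real.log (1+σ)| ≤ 4 * 1 :=
        mul_le_mul (abs_le_of_pos_le p1 b1) l1 (abs_nonneg _) (by norm_num)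
      _ = 4 := by norm_num
    have e2 : |v2 * Real.log σ| ≤ 4 := by
      rw [abs_mul]
      calc |v2| * |Real.log σ| ≤ 4 * 1 :=
        mul_le_mul (abs_le_of_pos_le p2 b2) l2 (abs_nonneg _) (by norm_num)
      _ = 4 := by norm_num
    calc |A2| ≤ |(-(u2 * Real.log (1+σ)))| + |v2 * Real.log σ| := abs_add_le _ _
    _ = |u2 * Real.log (1+σ)| + |v2 * Real.log σ| := by rw [abs_neg]
    _ ≤ 8 := by linarith only [e1, e2]
  have habsB2 : |B2| ≤ 8 := by
    have e1 : |u1 * Real.log (1+σ)| ≤ 4 := by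
      rw [abs_mul]
      calc |u1| * |Real.log (1+σ)| ≤ 4 * 1 :=
        mul_le_mul (abs_le_of_pos_le p3 b3) l1 (abs_nonneg _) (by norm_num)
      _ = 4 := by norm_num
    have e2 : |v1 * Real.log σ| ≤ 4 := by
      rw [abs_mul]
      calc |v1| * |Real.log σ| ≤ 4 * 1 :=
        mul_le_mul (abs_le_of_pos_le p4 b4) l2 (abs_nonneg _) (by norm_num)
      _ = 4 := by norm_num
    calc |B2| ≤ |(-(u1 * Real.log (1+σ)))| + |v1 * Real.log σ| := abs_add_le _ _
    _ = |u1 * Real.log (1+σ)| + |v1 * Real.log σ| := by rw [abs_neg]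
    _ ≤ 8 := by linarith only [e1, e2]
  have habsP : |P| ≤ 12 := by
    have e1 : |(u2 - v2)/(2-α)| ≤ 8 := by
      rw [abs_div, abs_of_pos h2α]
      exact le_trans (div_le_self (abs_nonneg _) h12α) habsA
    have e2 : |(u1 - v1)/2| ≤ 4 := by
      rw [abs_div, abs_of_pos (by norm_num : (0:ℝ) < 2)]
      linarith only [habsB]
    calc |P| ≤ |(u2 - v2)/(2-α)| + |(u1 - v1)/2| := abs_sub _ _
    _ ≤ 12 := by linarith only [e1, e2]
  have habsP2 : |P2| ≤ 28 := by
    have e1 : |(A2 * (2-α) + (u2 - v2))/(2-α)^2| ≤ 24 := by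
      rw [abs_div, abs_of_pos (pow_pos h2α 2)]
      have hA22 : |A2 * (2-α)| ≤ 16 := by
        rw [abs_mul, abs_of_pos h2α]
        calc |A2| * (2-α) ≤ 8 * 2 :=
          mul_le_mul habsA2 (by linarith only [hα0]) (by linarith only [h2α]) (by norm_num)
        _ = 16 := by norm_num
      have hnum : |A2 * (2-α) + (u2 - v2)| ≤ 24 := by
        calc |A2 * (2-α) + (u2 - v2)| ≤ |A2 * (2-α)| + |u2 - v2| := abs_add_le _ _
        _ ≤ 24 := by linarith only [hA22, habsA]
      have hden : (1:ℝ) ≤ (2-α)^2 := by nlinarith only [h12α]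
      exact le_trans (div_le_self (abs_nonneg _) hden) hnum
    have e2 : |B2 / 2| ≤ 4 := by
      rw [abs_div, abs_of_pos (by norm_num : (0:ℝ) < 2)]
      linarith only [habsB2]
    calc |P2| ≤ |(A2 * (2-α) + (u2 - v2))/(2-α)^2| + |B2 / 2| := abs_sub _ _
    _ ≤ 28 := by linarith only [e1, e2]
  have habsQ : |Q| ≤ 20 := by
    have m1 : (2-α) * (1+σ)^(2-α-1) ≤ 8 := by
      calc (2-α) * (1+σ)^(2-α-1) ≤ 2 * 4 :=
        mul_le_mul (by linarith only [hα0]) b5 p5.le (by norm_num)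
      _ = 8 := by norm_num
    have m2 : (2-α) * σ^(2-α-1) ≤ 8 := by
      calc (2-α) * σ^(2-α-1) ≤ 2 * 4 :=
        mul_le_mul (by linarith only [hα0]) b6 p6.le (by norm_num)
      _ = 8 := by norm_num
    have m3 : (1-α) * (1+σ)^(1-α-1) ≤ 4 := by
      calc (1-α) * (1+σ)^(1-α-1) ≤ 1 * 4 :=
        mul_le_mul (by linarith only [hα0]) b7 p7.le (by norm_num)
      _ = 4 := by norm_num
    have m4 : (1-α) * σ^(1-α-1) ≤ 4 := by
      calc (1-α) * σ^(1-α-1) ≤ 1 * 4 :=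
        mul_le_mul (by linarith only [hα0]) b8 p8.le (by norm_num)
      _ = 4 := by norm_num
    have h1α : (0:ℝ) < 1 - α := by linarith only [hα1]
    have e1 : |((2-α) * (1+σ)^(2-α-1) - (2-α) * σ^(2-α-1)) / (2-α)| ≤ 16 := by
      rw [abs_div, abs_of_pos h2α]
      have hnum : |(2-α) * (1+σ)^(2-α-1) - (2-α) * σ^(2-α-1)| ≤ 16 := by
        calc |(2-α) * (1+σ)^(2-α-1) - (2-α) * σ^(2-α-1)|
            ≤ |(2-α) * (1+σ)^(2-α-1)| + |(2-α) * σ^(2-α-1)| := abs_sub _ _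
        _ ≤ 16 := by
            rw [abs_of_pos (mul_pos h2α p5), abs_of_pos (mul_pos h2α p6)]
            linarith only [m1, m2]
      exact le_trans (div_le_self (abs_nonneg _) h12α) hnum
    have e2 : |((1-α) * (1+σ)^(1-α-1) - (1-α) * σ^(1-α-1)) / 2| ≤ 4 := by
      rw [abs_div, abs_of_pos (by norm_num : (0:ℝ) < 2)]
      have hnum : |(1-α) * (1+σ)^(1-α-1) - (1-α) * σ^(1-α-1)| ≤ 8 := by
        calc |(1-α) * (1+σ)^(1-α-1) - (1-α) * σ^(1-α-1)|
            ≤ |(1-α) * (1+σ)^(1-α-1)| + |(1-α) * σ^(1-α-1)| := abs_sub _ _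
        _ ≤ 8 := by
            rw [abs_of_pos (mul_pos h1α p7), abs_of_pos (mul_pos h1α p8)]
            linarith only [m3, m4]
      linarith only [hnum]
    calc |Q| ≤ |((2-α) * (1+σ)^(2-α-1) - (2-α) * σ^(2-α-1)) / (2-α)|
        + |((1-α) * (1+σ)^(1-α-1) - (1-α) * σ^(1-α-1)) / 2| := abs_sub _ _
    _ ≤ 20 := by linarith only [e1, e2]
  -- bound the numerator of the first term
  have hnum1 : |t * (deriv Real.Gamma (2-α) - Real.log τ * c)| ≤ t * (B + L * M) := by
    rw [abs_mul, abs_of_pos ht0]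
    have hh : |deriv Real.Gamma (2-α) - Real.log τ * c| ≤ B + L * M := by
      calc |deriv Real.Gamma (2-α) - Real.log τ * c|
          ≤ |deriv Real.Gamma (2-α)| + |Real.log τ * c| := abs_sub _ _
      _ ≤ B + L * M := by
          rw [abs_mul, ← hLdef]
          exact add_le_add hc'B (mul_le_mul_of_nonneg_left hcM hL0)
    exact mul_le_mul_of_nonneg_left hh ht0.le
  have hm2 : (0:ℝ) < m^2 := pow_pos hm0 2
  have hmc2 : m^2 ≤ c^2 := pow_le_pow_left₀ hm0.le hcm 2
  have h1t : |(t * (deriv Real.Gamma (2-α) - Real.log τ * c)) / c^2 * P|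
      ≤ (t * (B + L * M)) / m^2 * 12 := by
    rw [abs_mul, abs_div, abs_of_pos (pow_pos hc0 2)]
    apply mul_le_mul _ habsP (abs_nonneg _) (by positivity)
    exact div_le_div₀ (by positivity) hnum1 hm2 hmc2
  have h2t : |t / c * P2| ≤ t / m * 28 := by
    rw [abs_mul, abs_div, abs_of_pos ht0, abs_of_pos hc0]
    exact mul_le_mul (div_le_div₀ ht0.le le_rfl hm0 hcm) habsP2 (abs_nonneg _) (by positivity)
  have h3t : |t / c * Q| ≤ t / m * 20 := by
    rw [abs_mul, abs_div, abs_of_pos ht0, abs_of_pos hc0]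
    exact mul_le_mul (div_le_div₀ ht0.le le_rfl hm0 hcm) habsQ (abs_nonneg _) (by positivity)
  rw [hda, hds]
  calc |(t * (deriv Real.Gamma (2-α) - Real.log τ * c)) / c^2 * P + t / c * P2| + |t / c * Q|
      ≤ ((t * (B + L * M)) / m^2 * 12 + t / m * 28) + t / m * 20 :=
        add_le_add (le_trans (abs_add_le _ _) (add_le_add h1t h2t)) h3t
  _ ≤ 12*(B+M)/m^2 * (1+L) * tm + 48/m * (1+L) * tm := by
        have hfac : B + L * M ≤ (B+M) * (1+L) := by
          have := mul_nonneg hL0 hB0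
          have := mul_nonneg hL0 (le_trans hm0.le hmM)
          nlinarith only [hM0, hB0, hL0, mul_nonneg hL0 hB0, hmM, hm0]
        have hprod : t * (B + L * M) ≤ tm * ((B+M) * (1+L)) :=
          mul_le_mul httm hfac (by positivity) htm0.le
        have key1 : (t * (B + L * M)) / m^2 * 12 ≤ 12*(B+M)/m^2 * (1+L) * tm := by
          calc (t * (B + L * M)) / m^2 * 12 = (t * (B + L * M) * 12) / m^2 := by ring
          _ ≤ (tm * ((B+M) * (1+L)) * 12) / m^2 := by
              apply div_le_div₀ (by positivity) _ hm2 le_rfl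
              linarith only [hprod]
          _ = 12*(B+M)/m^2 * (1+L) * tm := by ring
        have key2 : t / m * 28 + t / m * 20 ≤ 48/m * (1+L) * tm := by
          have hnum : t * 48 ≤ 48 * (1+L) * tm := by
            nlinarith only [httm, mul_nonneg hL0 htm0.le]
          calc t / m * 28 + t / m * 20 = (t * 48) / m := by ring
          _ ≤ (48 * (1+L) * tm) / m := div_le_div₀ (by positivity) hnum hm0 le_rfl
          _ = 48/m * (1+L) * tm := by ring
        linarith only [key1, key2]
  _ = (12*(B+M)/m^2 + 48/m) * (1+L) * tm := by ring
  _ ≤ (12*(B+M)/m^2 + 48/m + 1) * (1+L) * tm := by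
        have h1L : (0:ℝ) ≤ (1+L) * tm := by positivity
        nlinarith only [h1L]
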